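/- For odd n ≥ 3, the joint rank-2^{n-1} numerical range Λ_{2^{n-1}}(X_n, Y_n, Z_n) is nonempty; specifically (0,0,1) ∈ Λ_{2^{n-1}}(X_n, Y_n, Z_n). -/
import Mathlib


open Matrix Finset Complex

noncomputable def sigmaX : Matrix (Fin 2) (Fin 2) ℂ := !![0, 1; 1, 0]
noncomputable def sigmaY : Matrix (Fin 2) (Fin 2) ℂ := !![0, -Complex.I; Complex.I, 0]
noncomputable def sigmaZ : Matrix (Fin 2) (Fin 2) ℂ := !![1, 0; 0, -1]

/-- `n`-fold Kronecker (tensor) power of a `2 × 2` matrix, acting on `ℂ^{2^n}`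
indexed by bit strings. -/
noncomputable def tpow (A : Matrix (Fin 2) (Fin 2) ℂ) (n : ℕ) :
    Matrix (Fin n → Fin 2) (Fin n → Fin 2) ℂ :=
  Matrix.of fun j k => ∏ i, A (j i) (k i)

/-- The joint rank-`k` numerical range of three matrices: triples `(a₁,a₂,a₃)` such that
`P Aⱼ P = aⱼ P` for some rank-`k` orthogonal projection `P`. -/
def jointRank3 {ι : Type*} [Fintype ι] [DecidableEq ι] (k : ℕ)
    (A B C : Matrix ι ι ℂ) : Set (ℂ × ℂ × ℂ) :=
  {t | ∃ P : Matrix ι ι ℂ, P.IsHermitian ∧ P * P = P ∧ P.rank = k ∧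
    P * A * P = t.1 • P ∧ P * B * P = t.2.1 • P ∧ P * C * P = t.2.2 • P}

namespace ParityAux

def parityEquiv (m : ℕ) :
    {j : Fin (m+1) → Fin 2 // Even (∑ i, (j i).val)} ≃ (Fin m → Fin 2) where
  toFun j := fun i => j.1 i.succ
  invFun g := ⟨Fin.cons (if Even (∑ i, (g i).val) then 0 else 1) g, by
    rw [Fin.sum_univ_succ]
    simp only [Fin.cons_succ, Fin.cons_zero]
    by_cases h : Even (∑ i, (g i).val)
    · simp [h]
    · simp only [h, if_false]
      have := Nat.odd_iff.mp (Nat.not_even_iff_odd.mp h)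
      rw [Nat.even_add]
      simp [Nat.even_iff, this]⟩
  left_inv := by
    rintro ⟨j, hj⟩
    apply Subtype.ext
    rw [Fin.sum_univ_succ] at hj
    rw [Nat.even_add, Nat.even_iff, Nat.even_iff] at hj
    have hb : (if Even (∑ i : Fin m, (j i.succ).val) then (0 : Fin 2) else 1) = j 0 := by
      by_cases h : (∑ i : Fin m, (j i.succ).val) % 2 = 0
      · have h0 : (j 0).val % 2 = 0 := by tauto
        have h1 : (j 0).val = 0 := by have := (j 0).isLt; omega
        rw [if_pos (Nat.even_iff.mpr h)]
        exact (Fin.ext h1).symm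
      · have h0 : ¬ (j 0).val % 2 = 0 := by tauto
        have h1 : (j 0).val = 1 := by have := (j 0).isLt; omega
        rw [if_neg (fun he => h (Nat.even_iff.mp he))]
        exact (Fin.ext h1).symm
    show Fin.cons (if Even (∑ i : Fin m, (j i.succ).val) then (0 : Fin 2) else 1) (fun i => j i.succ) = j
    rw [hb]
    exact Fin.cons_self_tail j
  right_inv := by intro g; ext i; simp

-- diagonal weight
noncomputable def d (n : ℕ) (j : Fin n → Fin 2) : ℂ :=
  if Even (∑ i, (j i).val) then 1 else 0

lemma d_mul_self (n : ℕ) (j : Fin n → Fin 2) : d n j * d n j = d n j := by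
  unfold d; split <;> simp

lemma star_d (n : ℕ) (j : Fin n → Fin 2) : star (d n j) = d n j := by
  unfold d; split <;> simp

lemma sigmaX_diag (a : Fin 2) : sigmaX a a = 0 := by
  fin_cases a <;> simp [sigmaX]

lemma sigmaY_diag (a : Fin 2) : sigmaY a a = 0 := by
  fin_cases a <;> simp [sigmaY]

lemma sigmaZ_apply (a b : Fin 2) : sigmaZ a b = if a = b then (-1 : ℂ) ^ (a.val) else 0 := by
  fin_cases a <;> fin_cases b <;> simp [sigmaZ]

/-- if both parities even and n odd, some coordinate agrees -/
lemma exists_agree {n : ℕ} (hodd : Odd n) {j k : Fin n → Fin 2}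
    (hj : Even (∑ i, (j i).val)) (hk : Even (∑ i, (k i).val)) : ∃ i, j i = k i := by
  by_contra h
  push_neg at h
  have hsum : ∀ i, (j i).val + (k i).val = 1 := by
    intro i
    have := h i
    have h1 := (j i).isLt; have h2 := (k i).isLt
    have : (j i).val ≠ (k i).val := fun he => this (Fin.ext he)
    omega
  have : (∑ i, (j i).val) + (∑ i, (k i).val) = n := by
    rw [← Finset.sum_add_distrib]
    simp [hsum]
  have := Nat.odd_iff.mp hodd
  rw [Nat.even_iff] at hj hk
  omega

lemma offdiag_zero {n : ℕ} (hodd : Odd n) (A : Matrix (Fin 2) (Fin 2) ℂ)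
    (hA : ∀ a, A a a = 0) (j k : Fin n → Fin 2) :
    d n j * tpow A n j k * d n k = 0 := by
  by_cases hj : Even (∑ i, (j i).val)
  · by_cases hk : Even (∑ i, (k i).val)
    · obtain ⟨i, hi⟩ := exists_agree hodd hj hk
      have : tpow A n j k = 0 := by
        refine Finset.prod_eq_zero (Finset.mem_univ i) ?_
        rw [hi]; exact hA _
      simp [this]
    · simp [d, hk]
  · simp [d, hj]

end ParityAux

open ParityAux in
theorem jointRank3_nonempty_odd (n : ℕ) (hn : 3 ≤ n) (hodd : Odd n) :
    ((0 : ℂ), (0 : ℂ), (1 : ℂ)) ∈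
      jointRank3 (2 ^ (n - 1)) (tpow sigmaX n) (tpow sigmaY n) (tpow sigmaZ n) := by
  refine ⟨Matrix.diagonal (d n), ?_, ?_, ?_, ?_, ?_, ?_⟩
  · rw [Matrix.IsHermitian, Matrix.diagonal_conjTranspose]
    have : star (d n) = d n := funext (star_d n)
    rw [this]
  · rw [Matrix.diagonal_mul_diagonal]
    have : (fun i => d n i * d n i) = d n := funext (d_mul_self n)
    rw [this]
  · rw [Matrix.rank_diagonal]
    have hcard : Fintype.card {j : Fin n → Fin 2 // Even (∑ i, (j i).val)} = 2 ^ (n - 1) := by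
      obtain ⟨m, rfl⟩ : ∃ m, n = m + 1 := ⟨n - 1, by omega⟩
      rw [Fintype.card_congr (parityEquiv m)]
      simp [Fintype.card_fun]
    rw [← hcard]
    apply Fintype.card_congr
    apply Equiv.subtypeEquivRight
    intro j
    simp only [d, ne_eq, ite_eq_right_iff, one_ne_zero]
    constructor
    · intro h; by_contra hc; exact h (fun he => absurd he hc)
    · intro h hc; exact hc h
  · ext j k
    rw [Matrix.mul_diagonal, Matrix.diagonal_mul]
    show d n j * tpow sigmaX n j k * d n k = ((0 : ℂ) • Matrix.diagonal (d n)) j k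
    rw [offdiag_zero hodd sigmaX sigmaX_diag]
    simp
  · ext j k
    rw [Matrix.mul_diagonal, Matrix.diagonal_mul]
    show d n j * tpow sigmaY n j k * d n k = ((0 : ℂ) • Matrix.diagonal (d n)) j k
    rw [offdiag_zero hodd sigmaY sigmaY_diag]
    simp
  · ext j k
    rw [Matrix.mul_diagonal, Matrix.diagonal_mul]
    show d n j * tpow sigmaZ n j k * d n k = ((1 : ℂ) • Matrix.diagonal (d n)) j k
    rw [one_smul]
    by_cases hjk : j = k
    · subst hjk
      have hz : tpow sigmaZ n j j = (-1 : ℂ) ^ (∑ i, (j i).val) := by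
        show (∏ i, sigmaZ (j i) (j i)) = _
        rw [← Finset.prod_pow_eq_pow_sum]
        refine Finset.prod_congr rfl fun i _ => ?_
        rw [sigmaZ_apply, if_pos rfl]
      rw [hz, Matrix.diagonal_apply_eq]
      by_cases h : Even (∑ i, (j i).val)
      · rw [h.neg_one_pow]
        simp [d, h]
      · simp [d, h]
    · have hz : tpow sigmaZ n j k = 0 := by
        obtain ⟨i, hi⟩ : ∃ i, j i ≠ k i := by
          by_contra h; push_neg at h; exact hjk (funext h)
        refine Finset.prod_eq_zero (Finset.mem_univ i) ?_
        rw [sigmaZ_apply, if_neg hi]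
      rw [hz, Matrix.diagonal_apply_ne _ hjk]
      ring
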